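/- Let D₀ be a d×K real matrix with unit Euclidean-norm columns whose columns span ℝ^d (a complete dictionary), let X₀ be a K×N real matrix, and set Y = D₀·X₀. Assume ‖X₀‖₁ = inf{‖X‖₁ : X is K×N and D₀·X = Y} (X₀ is a minimum ℓ1-norm representation of Y). If either (1) (D₀,X₀) is a local minimum of problem (P1'), or (2) D₀ is a global minimum of D ↦ C₁(D|Y) := inf{‖X‖₁ : D·X = Y} over all d×K matrices D with unit Euclidean-norm columns, then for every k ∈ {1,…,K} and every z ∈ ℝ^{K−1} one has |⟨u_k, z⟩| ≤ ‖X̄_kᵀ z‖₁. -/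

import Mathlib

open Matrix Finset MeasureTheory
open scoped ENNReal

noncomputable section

/-- Entrywise ℓ1 norm of a matrix: the sum of absolute values of all entries. -/
def l1Norm {m n : Type*} [Fintype m] [Fintype n] (X : Matrix m n ℝ) : ℝ :=
  ∑ i, ∑ j, |X i j|

/-- The dictionary has unit Euclidean-norm columns. -/
def UnitCols {d K : ℕ} (D : Matrix (Fin d) (Fin K) ℝ) : Prop :=
  ∀ k, ∑ i, (D i k) ^ 2 = 1

/-- `(D₀, X₀)` is a local minimum of problem (P1'): there is a neighbourhood of
`(D₀, X₀)` in which every pair `(D, X)` with `D` having unit columns and `D·X = Y`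
satisfies `‖X‖₁ ≥ ‖X₀‖₁`. -/
def IsLocalMinP1 {d K N : ℕ} (Y : Matrix (Fin d) (Fin N) ℝ)
    (D₀ : Matrix (Fin d) (Fin K) ℝ) (X₀ : Matrix (Fin K) (Fin N) ℝ) : Prop :=
  ∃ U ∈ nhds (D₀, X₀), ∀ DX ∈ U, UnitCols DX.1 → DX.1 * DX.2 = Y →
    l1Norm X₀ ≤ l1Norm DX.2

/-- The ℓ1 cost `C₁(D|Y) = inf {‖X‖₁ : D·X = Y}` (equal to `+∞` if no `X` exists). -/
def C1 {d K N : ℕ} (D : Matrix (Fin d) (Fin K) ℝ) (Y : Matrix (Fin d) (Fin N) ℝ) : ℝ≥0∞ :=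
  ⨅ (X : Matrix (Fin K) (Fin N) ℝ) (_ : D * X = Y), ENNReal.ofReal (l1Norm X)

/-- The vector `u_k = X_k (s^k)ᵀ − diag(‖x^ℓ‖₁)_{ℓ≠k} · m̄_k ∈ ℝ^{K−1}`,
indexed by the rows `ℓ ≠ k`. -/
def uVec {d K N : ℕ} (D₀ : Matrix (Fin d) (Fin K) ℝ) (X₀ : Matrix (Fin K) (Fin N) ℝ)
    (k : Fin K) (l : {l : Fin K // l ≠ k}) : ℝ :=
  (∑ n ∈ Finset.univ.filter fun n => X₀ k n ≠ 0, X₀ l.1 n * Real.sign (X₀ k n))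
    - (∑ n, |X₀ l.1 n|) * (∑ i, D₀ i l.1 * D₀ i k)

/-- splitting a sum over `Fin K` at `k` -/
lemma sum_split_at {K : ℕ} (k : Fin K) (g : Fin K → ℝ) :
    ∑ j, g j = g k + ∑ l : {l : Fin K // l ≠ k}, g l.1 := by
  rw [← Finset.add_sum_erase _ g (Finset.mem_univ k)]
  congr 1
  exact Finset.sum_subtype _ (fun x => by simp) g

lemma abs_add_small (x y : ℝ) (hx : x ≠ 0) (hxy : |y| ≤ |x|) :
    |x + y| = |x| + y * Real.sign x := by
  rcases lt_or_gt_of_ne hx with h | h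
  · have h2 := abs_le.mp hxy
    rw [Real.sign_of_neg h, abs_of_neg h] at *
    rw [abs_of_nonpos (by linarith)]
    ring
  · have h2 := abs_le.mp hxy
    rw [Real.sign_of_pos h, abs_of_pos h] at *
    rw [abs_of_nonneg (by linarith)]
    ring

lemma sqrt_le_aux (q : ℝ) (hq : 0 ≤ q) : Real.sqrt q ≤ (1 + q)/2 := by
  nlinarith [Real.sq_sqrt hq, Real.sqrt_nonneg q, sq_nonneg (Real.sqrt q - 1)]

lemma endgame_aux (A B Cc δ ε : ℝ) (hB0 : 0 ≤ B) (hCc0 : 0 ≤ Cc) (hδ : 0 < δ)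
    (hε : 0 < ε)
    (hkey : ∀ t : ℝ, |t| < δ → 0 ≤ t * A + |t| * B + t^2 * (Cc/2)) : |A| ≤ B + ε := by
  set s := min (δ/2) (ε/(Cc/2+1)) with hs
  have hs0 : 0 < s := lt_min (by linarith) (by positivity)
  have hsδ : s < δ := lt_of_le_of_lt (min_le_left _ _) (by linarith)
  have hsC : s * (Cc/2) ≤ ε := by
    have h5 : s ≤ ε/(Cc/2+1) := min_le_right _ _
    have h6 : (0:ℝ) < Cc/2+1 := by linarith
    calc s * (Cc/2) ≤ (ε/(Cc/2+1)) * (Cc/2) :=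
        mul_le_mul_of_nonneg_right h5 (by linarith)
    _ ≤ ε := by
        rw [div_mul_eq_mul_div, div_le_iff₀ h6]
        nlinarith
  have h7 : s^2*(Cc/2) ≤ s*ε := by
    have h8 := mul_le_mul_of_nonneg_left hsC hs0.le
    nlinarith
  rcases le_or_gt A 0 with hA' | hA'
  · have hk := hkey s (by rw [abs_of_pos hs0]; exact hsδ)
    rw [abs_of_pos hs0] at hk
    rw [abs_of_nonpos hA']
    nlinarith [hk, h7, hs0]
  · have hk := hkey (-s) (by rw [abs_neg, abs_of_pos hs0]; exact hsδ)
    rw [abs_neg, abs_of_pos hs0] at hk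
    rw [abs_of_pos hA']
    nlinarith [hk, h7, hs0]

lemma l1Norm_nonneg {m n : Type*} [Fintype m] [Fintype n] (X : Matrix m n ℝ) :
    0 ≤ l1Norm X :=
  Finset.sum_nonneg fun _ _ => Finset.sum_nonneg fun _ _ => abs_nonneg _

set_option maxHeartbeats 2000000 in
/-- **Necessary condition (Theorem NC).** If `(D₀,X₀)` is a local minimum of (P1'),
or `D₀` is a global minimum of `D ↦ C₁(D|Y)` over unit-column dictionaries, then
for every `k` and every `z ∈ ℝ^{K−1}`, `|⟨u_k, z⟩| ≤ ‖X̄_kᵀ z‖₁`. -/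
theorem stmt0 {d K N : ℕ} (D₀ : Matrix (Fin d) (Fin K) ℝ)
    (X₀ : Matrix (Fin K) (Fin N) ℝ) (Y : Matrix (Fin d) (Fin N) ℝ)
    (hY : Y = D₀ * X₀)
    (hunit : UnitCols D₀)
    (hcomplete : Submodule.span ℝ (Set.range fun k => (fun i => D₀ i k)) = ⊤)
    (hminrep : ∀ X : Matrix (Fin K) (Fin N) ℝ, D₀ * X = Y → l1Norm X₀ ≤ l1Norm X)
    (h : IsLocalMinP1 Y D₀ X₀ ∨
      (∀ D : Matrix (Fin d) (Fin K) ℝ, UnitCols D → C1 D₀ Y ≤ C1 D Y)) :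
    ∀ (k : Fin K) (z : {l : Fin K // l ≠ k} → ℝ),
      |∑ l, uVec D₀ X₀ k l * z l| ≤
        ∑ n ∈ Finset.univ.filter fun n => X₀ k n = 0,
          |∑ l : {l : Fin K // l ≠ k}, X₀ l.1 n * z l| := by
  classical
  intro k z
  set m : {l : Fin K // l ≠ k} → ℝ := fun l => ∑ i, D₀ i l.1 * D₀ i k with hm
  set w : Fin N → ℝ := fun n => ∑ l : {l : Fin K // l ≠ k}, X₀ l.1 n * z l with hwdef
  set nrm : {l : Fin K // l ≠ k} → ℝ := fun l => ∑ n, |X₀ l.1 n| with hnrm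
  set A := ∑ l, uVec D₀ X₀ k l * z l with hA
  set B := ∑ n ∈ Finset.univ.filter fun n => X₀ k n = 0, |w n| with hBdef
  set Cc := ∑ l, (z l)^2 * nrm l with hCcdef
  show |A| ≤ B
  have hnrm0 : ∀ l, 0 ≤ nrm l := fun l => Finset.sum_nonneg fun _ _ => abs_nonneg _
  have hB0 : 0 ≤ B := Finset.sum_nonneg fun _ _ => abs_nonneg _
  have hCc0 : 0 ≤ Cc := Finset.sum_nonneg fun l _ => mul_nonneg (sq_nonneg _) (hnrm0 l)
  set Λ : Finset (Fin N) := Finset.univ.filter (fun n => X₀ k n ≠ 0) with hΛ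
  -- the perturbation data
  set q : {l : Fin K // l ≠ k} → ℝ → ℝ :=
    fun l t => 1 - 2*t*z l*m l + t^2*(z l)^2 with hq
  set c : {l : Fin K // l ≠ k} → ℝ → ℝ := fun l t => Real.sqrt (q l t) with hc
  have hqsum : ∀ l t, q l t = ∑ i, (D₀ i l.1 - t * z l * D₀ i k)^2 := by
    intro l t
    have he : ∀ i : Fin d, (D₀ i l.1 - t * z l * D₀ i k)^2
        = (D₀ i l.1)^2 - (2*t*z l) * (D₀ i l.1 * D₀ i k) + (t^2*(z l)^2) * (D₀ i k)^2 := by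
      intro i; ring
    rw [Finset.sum_congr rfl fun i _ => he i]
    rw [Finset.sum_add_distrib, Finset.sum_sub_distrib, ← Finset.mul_sum, ← Finset.mul_sum,
      hunit l.1, hunit k]
    simp only [hq, hm]
    ring
  have hq0 : ∀ l t, 0 ≤ q l t := by
    intro l t
    rw [hqsum l t]
    exact Finset.sum_nonneg fun i _ => sq_nonneg _
  have hqpos : ∀ l t, |t * z l| < 1 → 0 < q l t := by
    intro l t ht
    rcases (hq0 l t).lt_or_eq with h' | h'
    · exact h'
    · exfalso
      have hz0 : ∀ i, D₀ i l.1 = t * z l * D₀ i k := by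
        intro i
        have h1 := (Finset.sum_eq_zero_iff_of_nonneg
          (fun i (_ : i ∈ Finset.univ) => sq_nonneg (D₀ i l.1 - t * z l * D₀ i k))).mp
          (by rw [← hqsum l t]; exact h'.symm) i (Finset.mem_univ i)
        have h2 := sq_eq_zero_iff.mp h1
        linarith
      have h1 : (1:ℝ) = (t*z l)^2 := by
        calc (1:ℝ) = ∑ i, (D₀ i l.1)^2 := (hunit l.1).symm
        _ = (t*z l)^2 * ∑ i, (D₀ i k)^2 := by
            rw [Finset.mul_sum]
            exact Finset.sum_congr rfl fun i _ => by rw [hz0 i]; ring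
        _ = (t*z l)^2 := by rw [hunit k]; ring
      nlinarith [sq_abs (t * z l), abs_nonneg (t * z l)]
  have hcpos : ∀ l t, 0 < q l t → 0 < c l t := fun l t ht => Real.sqrt_pos.mpr ht
  have hcsq : ∀ l t, (c l t)^2 = q l t := fun l t => Real.sq_sqrt (hq0 l t)
  have hq00 : ∀ l, q l 0 = 1 := by intro l; simp [hq]
  have hc1 : ∀ l, c l 0 = 1 := by intro l; rw [hc]; simp only; rw [hq00 l, Real.sqrt_one]
  have hcle : ∀ l t, c l t ≤ 1 - t * z l * m l + t^2*(z l)^2/2 := by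
    intro l t
    calc c l t ≤ (1 + q l t)/2 := sqrt_le_aux _ (hq0 l t)
    _ = 1 - t * z l * m l + t^2*(z l)^2/2 := by rw [hq]; ring
  -- the perturbed dictionary and coefficients
  set Dt : ℝ → Matrix (Fin d) (Fin K) ℝ := fun t i j =>
    if h : j = k then D₀ i k else (D₀ i j - t * z ⟨j,h⟩ * D₀ i k) / c ⟨j,h⟩ t with hDt
  set Xt : ℝ → Matrix (Fin K) (Fin N) ℝ := fun t j n =>
    if h : j = k then X₀ k n + t * w n else c ⟨j,h⟩ t * X₀ j n with hXt
  have hD0 : Dt 0 = D₀ := by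
    funext i j
    by_cases hj : j = k
    · subst hj; simp [hDt]
    · simp only [hDt, dif_neg hj, hc1]
      simp
  have hX0 : Xt 0 = X₀ := by
    funext j n
    by_cases hj : j = k
    · subst hj; simp [hXt]
    · simp only [hXt, dif_neg hj, hc1]
      simp
  have hunitDt : ∀ t, (∀ l, 0 < q l t) → UnitCols (Dt t) := by
    intro t hqt j
    by_cases hj : j = k
    · simp only [hDt, dif_pos hj]
      exact hunit k
    · simp only [hDt, dif_neg hj]
      have hce : c ⟨j,hj⟩ t ≠ 0 := (hcpos _ t (hqt _)).ne'
      have he : ∀ i : Fin d, ((D₀ i j - t * z ⟨j,hj⟩ * D₀ i k) / c ⟨j,hj⟩ t)^2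
          = (D₀ i j - t * z ⟨j,hj⟩ * D₀ i k)^2 / (c ⟨j,hj⟩ t)^2 := fun i => div_pow _ _ _
      rw [Finset.sum_congr rfl fun i _ => he i, ← Finset.sum_div, ← hqsum ⟨j,hj⟩ t,
        hcsq ⟨j,hj⟩ t]
      exact div_self (hqt ⟨j,hj⟩).ne'
  have hmul : ∀ t, (∀ l, 0 < q l t) → Dt t * Xt t = Y := by
    intro t hqt
    ext i n
    rw [hY, Matrix.mul_apply, Matrix.mul_apply]
    rw [sum_split_at k (fun j => Dt t i j * Xt t j n),
        sum_split_at k (fun j => D₀ i j * X₀ j n)]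
    have hterm : ∀ l : {l : Fin K // l ≠ k}, Dt t i l.1 * Xt t l.1 n
        = D₀ i l.1 * X₀ l.1 n - (X₀ l.1 n * z l) * (t * D₀ i k) := by
      intro l
      have hce : c l t ≠ 0 := (hcpos _ t (hqt _)).ne'
      simp only [hDt, hXt, dif_neg l.2]
      rw [Subtype.coe_eta]
      field_simp
    rw [Finset.sum_congr rfl fun l _ => hterm l, Finset.sum_sub_distrib, ← Finset.sum_mul]
    simp only [hDt, hXt, dif_pos rfl]
    rw [hwdef]
    ring
  -- ℓ1 norm of the perturbed coefficients
  have hl1Xt : ∀ t, (∀ l, 0 < q l t) →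
      l1Norm (Xt t) = (∑ n, |X₀ k n + t * w n|) + ∑ l : {l : Fin K // l ≠ k}, c l t * nrm l := by
    intro t hqt
    rw [l1Norm, sum_split_at k (fun j => ∑ n, |Xt t j n|)]
    congr 1
    · refine Finset.sum_congr rfl fun n _ => ?_
      simp only [hXt, dif_pos rfl]
    · refine Finset.sum_congr rfl fun l _ => ?_
      rw [hnrm]; simp only
      rw [Finset.mul_sum]
      refine Finset.sum_congr rfl fun n _ => ?_
      simp only [hXt, dif_neg l.2, Subtype.coe_eta]
      rw [abs_mul, abs_of_pos (hcpos l t (hqt l))]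
  -- ℓ1 norm of X₀, split
  have hl1X0 : l1Norm X₀ = (∑ n ∈ Λ, |X₀ k n|) + ∑ l : {l : Fin K // l ≠ k}, nrm l := by
    rw [l1Norm, sum_split_at k (fun j => ∑ n, |X₀ j n|)]
    congr 1
    rw [← Finset.sum_filter_add_sum_filter_not Finset.univ (fun n => X₀ k n ≠ 0)
      (fun n => |X₀ k n|)]
    have h2 : ∑ n ∈ Finset.univ.filter (fun n => ¬ X₀ k n ≠ 0), |X₀ k n| = 0 := by
      refine Finset.sum_eq_zero fun n hn => ?_
      rw [Finset.mem_filter] at hn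
      rw [not_not.mp hn.2, abs_zero]
    rw [h2, add_zero]
  -- key quantities
  set Q := ∑ n ∈ Λ, w n * Real.sign (X₀ k n) with hQ
  set R := ∑ l : {l : Fin K // l ≠ k}, z l * m l * nrm l with hR
  have hAQR : A = Q - R := by
    rw [hA, hQ, hR]
    simp only [uVec, sub_mul]
    rw [Finset.sum_sub_distrib]
    congr 1
    · calc ∑ l : {l : Fin K // l ≠ k},
            (∑ n ∈ Finset.univ.filter (fun n => X₀ k n ≠ 0), X₀ l.1 n * Real.sign (X₀ k n)) * z l
          = ∑ l : {l : Fin K // l ≠ k}, ∑ n ∈ Λ, X₀ l.1 n * z l * Real.sign (X₀ k n) := by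
            refine Finset.sum_congr rfl fun l _ => ?_
            rw [Finset.sum_mul]
            exact Finset.sum_congr rfl fun n _ => by ring
        _ = ∑ n ∈ Λ, ∑ l : {l : Fin K // l ≠ k}, X₀ l.1 n * z l * Real.sign (X₀ k n) :=
            Finset.sum_comm
        _ = ∑ n ∈ Λ, w n * Real.sign (X₀ k n) := by
            refine Finset.sum_congr rfl fun n _ => ?_
            rw [hwdef]; simp only
            rw [Finset.sum_mul]
    · refine Finset.sum_congr rfl fun l _ => ?_
      rw [hnrm, hm]; simp only
      ring
  -- the upper bound on the ℓ1 norm of the perturbed coefficients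
  have hupper : ∀ t, (∀ l, 0 < q l t) → (∀ n ∈ Λ, |t * w n| ≤ |X₀ k n|) →
      l1Norm (Xt t) ≤ l1Norm X₀ + t * A + |t| * B + t^2 * (Cc/2) := by
    intro t hqt hsmall
    rw [hl1Xt t hqt, hl1X0, hAQR]
    have hrow : ∑ n, |X₀ k n + t * w n|
        = (∑ n ∈ Λ, |X₀ k n|) + t * Q + |t| * B := by
      rw [← Finset.sum_filter_add_sum_filter_not Finset.univ (fun n => X₀ k n ≠ 0)
        (fun n => |X₀ k n + t * w n|)]
      have h1 : ∑ n ∈ Λ, |X₀ k n + t * w n|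
          = ∑ n ∈ Λ, (|X₀ k n| + t * (w n * Real.sign (X₀ k n))) := by
        refine Finset.sum_congr rfl fun n hn => ?_
        rw [hΛ, Finset.mem_filter] at hn
        rw [← mul_assoc]
        exact abs_add_small _ _ hn.2 (hsmall n (by rw [hΛ]; exact Finset.mem_filter.mpr hn))
      have h2 : ∑ n ∈ Finset.univ.filter (fun n => ¬ X₀ k n ≠ 0), |X₀ k n + t * w n|
          = |t| * B := by
        rw [hBdef, Finset.mul_sum]
        rw [show Finset.univ.filter (fun n : Fin N => ¬ X₀ k n ≠ 0)
          = Finset.univ.filter (fun n : Fin N => X₀ k n = 0) by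
            refine Finset.filter_congr fun n _ => by simp]
        refine Finset.sum_congr rfl fun n hn => ?_
        rw [Finset.mem_filter] at hn
        rw [hn.2, zero_add, abs_mul]
      rw [h1, h2, Finset.sum_add_distrib, ← Finset.mul_sum, ← hQ]
    have hcol : ∑ l : {l : Fin K // l ≠ k}, c l t * nrm l
        ≤ (∑ l : {l : Fin K // l ≠ k}, nrm l) - t * R + t^2 * (Cc/2) := by
      have h1 : ∀ l : {l : Fin K // l ≠ k}, c l t * nrm l
          ≤ (1 - t * z l * m l + t^2*(z l)^2/2) * nrm l :=
        fun l => mul_le_mul_of_nonneg_right (hcle l t) (hnrm0 l)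
      calc ∑ l : {l : Fin K // l ≠ k}, c l t * nrm l
          ≤ ∑ l : {l : Fin K // l ≠ k}, (1 - t * z l * m l + t^2*(z l)^2/2) * nrm l :=
            Finset.sum_le_sum fun l _ => h1 l
        _ = ∑ l : {l : Fin K // l ≠ k},
              (nrm l - t * (z l * m l * nrm l) + t^2/2 * ((z l)^2 * nrm l)) :=
            Finset.sum_congr rfl fun l _ => by ring
        _ = (∑ l : {l : Fin K // l ≠ k}, nrm l) - t * R + t^2 * (Cc/2) := by
            rw [Finset.sum_add_distrib, Finset.sum_sub_distrib, ← Finset.mul_sum,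
              ← Finset.mul_sum, ← hR, ← hCcdef]
            ring
    linarith [hrow, hcol]
  -- eventual positivity of q
  have hqev : ∀ᶠ t in nhds (0:ℝ), ∀ l, 0 < q l t := by
    rw [Filter.eventually_all]
    intro l
    have h1 : Filter.Tendsto (fun t : ℝ => |t * z l|) (nhds 0) (nhds |0 * z l|) :=
      (continuous_abs.comp (continuous_id.mul continuous_const)).continuousAt
    rw [zero_mul, abs_zero] at h1
    exact (h1.eventually_lt_const one_pos).mono fun t ht => hqpos l t ht
  have hsignev : ∀ᶠ t in nhds (0:ℝ), ∀ n ∈ Λ, |t * w n| ≤ |X₀ k n| := by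
    rw [Filter.eventually_all_finset]
    intro n hn
    have hpos : 0 < |X₀ k n| := by
      rw [hΛ, Finset.mem_filter] at hn
      exact abs_pos.mpr hn.2
    have h1 : Filter.Tendsto (fun t : ℝ => |t * w n|) (nhds 0) (nhds |0 * w n|) :=
      (continuous_abs.comp (continuous_id.mul continuous_const)).continuousAt
    rw [zero_mul, abs_zero] at h1
    exact (h1.eventually_lt_const hpos).mono fun t ht => ht.le
  -- the lower bound coming from the optimality hypotheses
  have hlower : ∀ᶠ t in nhds (0:ℝ), l1Norm X₀ ≤ l1Norm (Xt t) := by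
    rcases h with hloc | hglob
    · obtain ⟨U, hU, hUP⟩ := hloc
      have hcont : ContinuousAt (fun t => (Dt t, Xt t)) (0:ℝ) := by
        apply ContinuousAt.prodMk
        · refine continuousAt_pi.2 ?_; intro i; rw [continuousAt_pi]; intro j
          by_cases hj : j = k
          · simp only [hDt, dif_pos hj]; exact continuousAt_const
          · simp only [hDt, dif_neg hj, hc, hq]
            apply ContinuousAt.div
            · fun_prop
            · exact (((by fun_prop : Continuous fun t : ℝ =>
                1 - 2*t*z ⟨j,hj⟩*m ⟨j,hj⟩ + t^2*(z ⟨j,hj⟩)^2).sqrt).continuousAt)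
            · norm_num
        · refine continuousAt_pi.2 ?_; intro j; rw [continuousAt_pi]; intro n
          by_cases hj : j = k
          · simp only [hXt, dif_pos hj]; fun_prop
          · simp only [hXt, dif_neg hj, hc, hq]
            exact ((((by fun_prop : Continuous fun t : ℝ =>
              1 - 2*t*z ⟨j,hj⟩*m ⟨j,hj⟩ + t^2*(z ⟨j,hj⟩)^2).sqrt).mul
                continuous_const).continuousAt)
      have hg0 : (fun t => (Dt t, Xt t)) 0 = (D₀, X₀) := by
        simp only [hD0, hX0]
      have hev := hcont.preimage_mem_nhds
        (show U ∈ nhds ((fun t => (Dt t, Xt t)) 0) by rw [hg0]; exact hU)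
      filter_upwards [hev, hqev] with t htU hqt
      exact hUP _ htU (hunitDt t hqt) (hmul t hqt)
    · filter_upwards [hqev] with t hqt
      have h1 : ENNReal.ofReal (l1Norm X₀) ≤ C1 D₀ Y := by
        simp only [C1]
        exact le_iInf fun X => le_iInf fun hX => ENNReal.ofReal_le_ofReal (hminrep X hX)
      have h2 : C1 (Dt t) Y ≤ ENNReal.ofReal (l1Norm (Xt t)) := by
        simp only [C1]
        exact iInf_le_of_le (Xt t) (iInf_le_of_le (hmul t hqt) le_rfl)
      have h3 := h1.trans ((hglob (Dt t) (hunitDt t hqt)).trans h2)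
      rwa [ENNReal.ofReal_le_ofReal_iff (l1Norm_nonneg _)] at h3
  -- the key differential inequality
  have hkey : ∀ᶠ t in nhds (0:ℝ), 0 ≤ t * A + |t| * B + t^2 * (Cc/2) := by
    filter_upwards [hlower, hqev, hsignev] with t h1 h2 h3
    have h4 := hupper t h2 h3
    linarith [h1.trans h4]
  rw [Metric.eventually_nhds_iff] at hkey
  obtain ⟨δ, hδ, hkey⟩ := hkey
  simp only [Real.dist_eq, sub_zero] at hkey
  -- conclude
  refine le_of_forall_pos_le_add fun ε hε =>
    endgame_aux A B Cc δ ε hB0 hCc0 hδ hε fun t ht => hkey ht
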